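/- Every weighted sequence X of length n over a nonempty finite alphabet Σ and every real threshold z ≥ 1 admit a z-estimation: there exist ⌊z⌋ strings S_1,…,S_{⌊z⌋} of length n over Σ and property arrays π_1,…,π_{⌊z⌋} such that for every string P over Σ and every position i ∈ {1,…,n}, the number of indices j with i ∈ Occ_{π_j}(P,S_j) equals ⌊z·P_X(P,i)⌋. -/

import Mathlib

open scoped Classical
open Finset

variable {α : Type*}

/-- Matching probability `P_X(P,i)` of pattern `P` at (1-based) position `i`
in a weighted sequence of length `n` with letter probabilities `p`. -/
def matchProb (n : ℕ) (p : ℕ → α → ℝ) : List α → ℕ → ℝ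
  | [], _ => 1
  | c :: P, i => if i ≤ n then p i c * matchProb n p P (i + 1) else 0

/-- `p` describes a weighted sequence of length `n`: at each position `i ∈ {1,…,n}`
the letter probabilities are nonnegative and sum to 1. -/
def IsWeighted [Fintype α] (n : ℕ) (p : ℕ → α → ℝ) : Prop :=
  ∀ i, 1 ≤ i → i ≤ n → (∀ c, 0 ≤ p i c) ∧ ∑ c, p i c = 1

/-- A property array for strings of length `n`:
`π i ∈ {i-1,…,n}` for `i ∈ {1,…,n}` and `π` is nondecreasing on `{1,…,n}`. -/
def IsPropertyArray (n : ℕ) (π : ℕ → ℕ) : Prop :=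
  (∀ i, 1 ≤ i → i ≤ n → i - 1 ≤ π i ∧ π i ≤ n) ∧
    ∀ i, 1 ≤ i → i + 1 ≤ n → π i ≤ π (i + 1)

/-- The factor `S[i..j]` (1-based, empty when `j < i`). -/
def factor (S : List α) (i j : ℕ) : List α := (S.drop (i - 1)).take (j + 1 - i)

/-- `i ∈ Occ_π(P,S)`: `P = S[i..i+|P|-1]` and `i+|P|-1 ≤ π i`. -/
def occursAt (S : List α) (π : ℕ → ℕ) (P : List α) (i : ℕ) : Prop :=
  factor S i (i + P.length - 1) = P ∧ i + P.length - 1 ≤ π i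

/-- `Count_𝒮(P,i)`: number of members of the family in which `P` occurs at `i`
respecting the property. -/
noncomputable def countOcc {k : ℕ} (S : Fin k → List α) (π : Fin k → ℕ → ℕ)
    (P : List α) (i : ℕ) : ℕ :=
  (Finset.univ.filter fun j => occursAt (S j) (π j) P i).card

/-- `P` is compatible with `Q` if `P = ε` or `P = cQ'` for a letter `c` and a prefix `Q'` of `Q`. -/
def Compatible (P Q : List α) : Prop :=
  P = [] ∨ ∃ (c : α) (Q' : List α), Q' <+: Q ∧ P = c :: Q'

/-- A random string `S : Fin n → α` matches pattern `P` at (1-based) position `i`. -/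
def Matches {n : ℕ} (S : Fin n → α) (P : List α) (i : ℕ) : Prop :=
  ((List.ofFn S).drop (i - 1)).take P.length = P

/-- The probability of the outcome `S` under the product distribution determined by `p`. -/
def strWeight (n : ℕ) (p : ℕ → α → ℝ) (S : Fin n → α) : ℝ :=
  ∏ j : Fin n, p ((j : ℕ) + 1) (S j)

section Aux
variable [Fintype α]

lemma matchProb_nonneg (n : ℕ) (p : ℕ → α → ℝ) (hp : IsWeighted n p) :
    ∀ (P : List α) (i : ℕ), 1 ≤ i → 0 ≤ matchProb n p P i := by
  intro P
  induction P with
  | nil => intro i _; simp [matchProb]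
  | cons c P ih =>
      intro i hi
      rw [matchProb]
      split
      · exact mul_nonneg ((hp i hi (by assumption)).1 c) (ih (i+1) (by omega))
      · exact le_refl _

lemma matchProb_append_singleton (n : ℕ) (p : ℕ → α → ℝ) :
    ∀ (Q : List α) (c : α) (i : ℕ),
      matchProb n p (Q ++ [c]) i =
        matchProb n p Q i * (if i + Q.length ≤ n then p (i + Q.length) c else 0) := by
  intro Q
  induction Q with
  | nil => intro c i; simp [matchProb]
  | cons a Q ih =>
      intro c i
      show matchProb n p (a :: (Q ++ [c])) i = _
      rw [matchProb, matchProb, ih c (i+1)]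
      by_cases h : i ≤ n
      · simp only [if_pos h]
        have : i + 1 + Q.length = i + (a :: Q).length := by simp; omega
        rw [this]; ring
      · simp [h]

lemma matchProb_zero_of_long (n : ℕ) (p : ℕ → α → ℝ) :
    ∀ (Q : List α) (i : ℕ), Q ≠ [] → n + 2 ≤ i + Q.length → matchProb n p Q i = 0 := by
  intro Q
  induction Q with
  | nil => intro i h; exact absurd rfl h
  | cons a Q ih =>
      intro i _ hlen
      rw [matchProb]
      split
      · rcases eq_or_ne Q [] with rfl | hQ
        · simp at hlen; omega
        · rw [ih (i+1) hQ (by simp at hlen ⊢; omega), mul_zero]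
      · rfl

lemma floor_sum_le {s : Finset α} (x : α → ℝ) (hx : ∀ c ∈ s, 0 ≤ x c) :
    ∑ c ∈ s, ⌊x c⌋₊ ≤ ⌊∑ c ∈ s, x c⌋₊ := by
  apply Nat.le_floor
  push_cast
  exact Finset.sum_le_sum fun c hc => Nat.floor_le (hx c hc)

/-- Chopping lemma: split (part of) `s` into labeled pieces of prescribed sizes. -/
lemma chopAux {J : Type*} : ∀ (cs : Finset α) (s : Finset J) (need : α → ℕ),
    (∑ c ∈ cs, need c ≤ s.card) →
    ∃ f : J → Option α, (∀ j c, f j = some c → j ∈ s ∧ c ∈ cs) ∧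
      ∀ c ∈ cs, (s.filter fun j => f j = some c).card = need c := by
  intro cs
  induction cs using Finset.induction_on with
  | empty =>
      intro s need _
      exact ⟨fun _ => none, by simp, by simp⟩
  | @insert a cs ha ih =>
      intro s need hsum
      rw [Finset.sum_insert ha] at hsum
      obtain ⟨u, hus, hucard⟩ := Finset.exists_subset_card_eq (show need a ≤ s.card by omega)
      have hcard : ∑ c ∈ cs, need c ≤ (s \ u).card := by
        rw [Finset.card_sdiff_of_subset hus]; omega
      obtain ⟨f₀, hf₀mem, hf₀cnt⟩ := ih (s \ u) need hcard
      refine ⟨fun j => if j ∈ u then some a else f₀ j, ?_, ?_⟩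
      · intro j c hj
        by_cases hju : j ∈ u
        · simp only [if_pos hju] at hj
          obtain rfl : a = c := by simpa using hj
          exact ⟨hus hju, Finset.mem_insert_self _ _⟩
        · simp only [if_neg hju] at hj
          obtain ⟨hjs, hc⟩ := hf₀mem j c hj
          exact ⟨(Finset.mem_sdiff.1 hjs).1, Finset.mem_insert_of_mem hc⟩
      · intro c hc
        rcases Finset.mem_insert.1 hc with rfl | hc'
        · rw [← hucard]
          congr 1
          ext j
          simp only [Finset.mem_filter]
          constructor
          · rintro ⟨hjs, hj⟩
            by_cases hju : j ∈ u
            · exact hju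
            · simp only [if_neg hju] at hj
              exact absurd (hf₀mem j c hj).2 ha
          · intro hju
            exact ⟨hus hju, by simp [hju]⟩
        · rw [← hf₀cnt c hc']
          congr 1
          ext j
          simp only [Finset.mem_filter, Finset.mem_sdiff]
          constructor
          · rintro ⟨hjs, hj⟩
            by_cases hju : j ∈ u
            · simp only [if_pos hju] at hj
              obtain rfl : a = c := by simpa using hj
              exact absurd hc' ha
            · simp only [if_neg hju] at hj
              exact ⟨⟨hjs, hju⟩, hj⟩
          · rintro ⟨⟨hjs, hju⟩, hj⟩
            exact ⟨hjs, by simp only [if_neg hju]; exact hj⟩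

lemma chop {J : Type*} [Fintype α] (s : Finset J) (need : α → ℕ)
    (h : ∑ c, need c ≤ s.card) :
    ∃ f : J → Option α, (∀ j c, f j = some c → j ∈ s) ∧
      ∀ c, (s.filter fun j => f j = some c).card = need c := by
  obtain ⟨f, h1, h2⟩ := chopAux Finset.univ s need h
  exact ⟨f, fun j c hj => (h1 j c hj).1, fun c => h2 c (Finset.mem_univ c)⟩

end Aux

section SEL
variable [Fintype α]

omit [Fintype α] in
lemma exists_prefix_snoc {Q u : List α} (h : Q <+: u) (hlt : Q.length < u.length) :
    ∃ c, Q ++ [c] <+: u := by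
  obtain ⟨r, rfl⟩ := h
  cases r with
  | nil => simp at hlt
  | cons c r => exact ⟨c, (List.prefix_append_right_inj Q).2 ⟨r, by simp⟩⟩

omit [Fintype α] in
lemma prefix_of_prefix_of_le {P T u : List α} (hP : P <+: u) (hT : T <+: u)
    (h : P.length ≤ T.length) : P <+: T := by
  rcases List.prefix_or_prefix_of_prefix hP hT with h1 | h1
  · exact h1
  · obtain rfl := h1.eq_of_length (le_antisymm h1.length_le h)
    exact List.prefix_rfl

omit [Fintype α] in
lemma snoc_ext_unique {Q u : List α} {c₁ c₂ : α} (h1 : Q ++ [c₁] <+: u)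
    (h2 : Q ++ [c₂] <+: u) : c₁ = c₂ := by
  have := prefix_of_prefix_of_le h1 h2 (by simp)
  have heq := this.eq_of_length (by simp)
  simpa using heq

/-- Invariant for the bottom-up construction in the selection lemma. -/
def SelGood {k : ℕ} (t : Fin k → List α) (m : α → List α → ℕ) (d : ℕ)
    (σ : Fin k → Option (α × List α)) : Prop :=
  (∀ j c u, σ j = some (c, u) → u <+: t j ∧ d ≤ u.length) ∧
  (∀ (c : α) (Q : List α), d ≤ Q.length →
    (univ.filter fun j => ∃ u, σ j = some (c, u) ∧ Q <+: u).card = m c Q)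

lemma sel_step {k : ℕ} (t : Fin k → List α) (m : α → List α → ℕ)
    (hA : ∀ Q : List α, ∑ c, m c Q ≤ (univ.filter fun j => Q <+: t j).card)
    (hB : ∀ (c : α) (Q : List α), ∑ c', m c (Q ++ [c']) ≤ m c Q)
    (d : ℕ) (h : ∃ σ, SelGood t m (d + 1) σ) : ∃ σ, SelGood t m d σ := by
  obtain ⟨σ, hσ1, hσ2⟩ := h
  -- Claim 1: at a level-`d` node, the selected strings split by their next letter
  have claim1 : ∀ (c : α) (Q : List α), Q.length = d →
      (univ.filter fun j => ∃ u, σ j = some (c, u) ∧ Q <+: u).card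
        = ∑ c', m c (Q ++ [c']) := by
    intro c Q hQ
    have hset : (univ.filter fun j => ∃ u, σ j = some (c, u) ∧ Q <+: u)
        = Finset.biUnion univ (fun c' => univ.filter fun j =>
            ∃ u, σ j = some (c, u) ∧ Q ++ [c'] <+: u) := by
      ext j
      simp only [Finset.mem_filter, Finset.mem_biUnion, Finset.mem_univ, true_and]
      constructor
      · rintro ⟨u, hju, hQu⟩
        have hlen : Q.length < u.length := by
          have := (hσ1 j c u hju).2; omega
        obtain ⟨c', hc'⟩ := exists_prefix_snoc hQu hlen
        exact ⟨c', u, hju, hc'⟩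
      · rintro ⟨c', u, hju, hc'⟩
        exact ⟨u, hju, ((List.prefix_append Q [c']).trans hc')⟩
    rw [hset, Finset.card_biUnion]
    · exact Finset.sum_congr rfl fun c' _ => hσ2 c (Q ++ [c']) (by simp [hQ])
    · intro c₁ _ c₂ _ hne
      rw [Function.onFun, Finset.disjoint_left]
      rintro j hj1 hj2
      simp only [Finset.mem_filter, Finset.mem_univ, true_and] at hj1 hj2
      obtain ⟨u, hju, h1⟩ := hj1
      obtain ⟨u', hju', h2⟩ := hj2
      rw [hju] at hju'
      obtain rfl : u = u' := by simpa using hju'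
      exact hne (snoc_ext_unique h1 h2)
  -- Claim 2: count of already-selected strings through a level-`d` node
  have claimSel : ∀ Q : List α, Q.length = d →
      (univ.filter fun j => Q <+: t j ∧ σ j ≠ none).card
        = ∑ c, ∑ c', m c (Q ++ [c']) := by
    intro Q hQ
    have hset : (univ.filter fun j => Q <+: t j ∧ σ j ≠ none)
        = Finset.biUnion univ (fun c => univ.filter fun j =>
            ∃ u, σ j = some (c, u) ∧ Q <+: u) := by
      ext j
      simp only [Finset.mem_filter, Finset.mem_biUnion, Finset.mem_univ, true_and]
      constructor
      · rintro ⟨hQt, hne⟩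
        cases hj : σ j with
        | none => exact absurd hj hne
        | some x =>
            obtain ⟨c, u⟩ := x
            obtain ⟨hut, hlen⟩ := hσ1 j c u hj
            exact ⟨c, u, rfl, prefix_of_prefix_of_le hQt hut (by omega)⟩
      · rintro ⟨c, u, hju, hQu⟩
        exact ⟨hQu.trans (hσ1 j c u hju).1, by simp [hju]⟩
    rw [hset, Finset.card_biUnion]
    · exact Finset.sum_congr rfl fun c _ => claim1 c Q hQ
    · intro c₁ _ c₂ _ hne
      rw [Function.onFun, Finset.disjoint_left]
      rintro j hj1 hj2
      simp only [Finset.mem_filter, Finset.mem_univ, true_and] at hj1 hj2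
      obtain ⟨u, hju, -⟩ := hj1
      obtain ⟨u', hju', -⟩ := hj2
      rw [hju] at hju'
      exact hne (show c₁ = c₂ ∧ u = u' by simpa using hju').1
  -- number of unselected strings through a level-`d` node
  have claimUnsel : ∀ Q : List α, Q.length = d →
      (univ.filter fun j => Q <+: t j ∧ σ j = none).card
        + ∑ c, ∑ c', m c (Q ++ [c'])
        = (univ.filter fun j => Q <+: t j).card := by
    intro Q hQ
    rw [← claimSel Q hQ]
    rw [← Finset.filter_filter, ← Finset.filter_filter]
    exact Finset.card_filter_add_card_filter_not (fun j => σ j = none)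
  have hneed : ∀ Q : List α, Q.length = d →
      ∑ c, (m c Q - ∑ c', m c (Q ++ [c']))
        ≤ (univ.filter fun j => Q <+: t j ∧ σ j = none).card := by
    intro Q hQ
    have h1 : ∑ c, (m c Q - ∑ c', m c (Q ++ [c'])) + ∑ c, ∑ c', m c (Q ++ [c'])
        = ∑ c, m c Q := by
      rw [← Finset.sum_add_distrib]
      exact Finset.sum_congr rfl fun c _ => Nat.sub_add_cancel (hB c Q)
    have h2 := hA Q
    have h3 := claimUnsel Q hQ
    omega
  -- choose the padding
  have hex : ∀ Q : List α, ∃ f : Fin k → Option α,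
      (∀ j c, f j = some c → j ∈ univ.filter (fun j => Q <+: t j ∧ σ j = none)) ∧
      (∀ j c, f j = some c → Q.length = d) ∧
      (Q.length = d → ∀ c,
        ((univ.filter (fun j => Q <+: t j ∧ σ j = none)).filter
          fun j => f j = some c).card = m c Q - ∑ c', m c (Q ++ [c'])) := by
    intro Q
    by_cases hQ : Q.length = d
    · obtain ⟨f, h1, h2⟩ := chop _ (fun c => m c Q - ∑ c', m c (Q ++ [c'])) (hneed Q hQ)
      exact ⟨f, h1, fun _ _ _ => hQ, fun _ => h2⟩
    · exact ⟨fun _ => none, by simp, by simp, fun h => absurd h hQ⟩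
  choose ch hch1 hch1' hch2 using hex
  -- the extended assignment
  refine ⟨fun j => (σ j).elim ((ch ((t j).take d) j).map
      (fun c => (c, (t j).take d))) some, ?_, ?_⟩
  · rintro j c u hj
    cases hσj : σ j with
    | some x =>
        simp only [hσj, Option.elim_some] at hj
        obtain rfl : x = (c, u) := by simpa using hj
        obtain ⟨h1, h2⟩ := hσ1 j c u hσj
        exact ⟨h1, by omega⟩
    | none =>
        simp only [hσj, Option.elim_none, Option.map_eq_some_iff] at hj
        obtain ⟨c', hc', heq⟩ := hj
        obtain ⟨rfl, rfl⟩ : c' = c ∧ (t j).take d = u := by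
          simpa using heq
        have hmem := hch1 _ j _ hc'
        simp only [Finset.mem_filter, Finset.mem_univ, true_and] at hmem
        refine ⟨hmem.1, ?_⟩
        rw [hch1' _ j _ hc']
  · intro c Q hdQ
    rcases eq_or_lt_of_le hdQ with hQd | hQd
    · -- Q.length = d : old count plus the padding
      have hQd := hQd.symm
      have hsplit : (univ.filter fun j => ∃ u,
            ((σ j).elim ((ch ((t j).take d) j).map (fun c => (c, (t j).take d))) some)
              = some (c, u) ∧ Q <+: u)
          = (univ.filter fun j => ∃ u, σ j = some (c, u) ∧ Q <+: u)
            ∪ ((univ.filter (fun j => Q <+: t j ∧ σ j = none)).filter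
                fun j => ch Q j = some c) := by
        ext j
        simp only [Finset.mem_filter, Finset.mem_union, Finset.mem_univ, true_and]
        constructor
        · rintro ⟨u, hju, hQu⟩
          cases hσj : σ j with
          | some x =>
              left
              obtain rfl : x = (c, u) := by
                simp only [hσj, Option.elim_some] at hju
                simpa using hju
              exact ⟨u, rfl, hQu⟩
          | none =>
              right
              simp only [hσj, Option.elim_none, Option.map_eq_some_iff] at hju
              obtain ⟨c', hc', heq⟩ := hju
              obtain ⟨rfl, rfl⟩ : c' = c ∧ (t j).take d = u := by
                simpa using heq
              have hmem := hch1 _ j _ hc'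
              simp only [Finset.mem_filter, Finset.mem_univ, true_and] at hmem
              have hQeq : Q = (t j).take d := by
                refine hQu.eq_of_length ?_
                have h1 := hQu.length_le
                have h2 : ((t j).take d).length ≤ d := by simp
                omega
              rw [← hQeq] at hc'
              exact ⟨⟨hQu.trans hmem.1, rfl⟩, hc'⟩
        · rintro (⟨u, hju, hQu⟩ | ⟨⟨hQt, hσj⟩, hc⟩)
          · exact ⟨u, by simp only [hju, Option.elim_some], hQu⟩
          · have hQeq : (t j).take d = Q := by
              rw [List.prefix_iff_eq_take] at hQt
              rw [← hQd]
              exact hQt.symm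
            refine ⟨Q, ?_, List.prefix_rfl⟩
            rw [hσj, Option.elim_none, hQeq, hc, Option.map_some]
      rw [hsplit, Finset.card_union_of_disjoint, claim1 c Q hQd, hch2 Q hQd c]
      · have := hB c Q
        omega
      · rw [Finset.disjoint_left]
        rintro j hj1 hj2
        simp only [Finset.mem_filter, Finset.mem_univ, true_and] at hj1 hj2
        obtain ⟨u, hju, -⟩ := hj1
        rw [hj2.1.2] at hju
        exact nomatch hju
    · -- d < Q.length : the count is unchanged
      have : (univ.filter fun j => ∃ u,
            ((σ j).elim ((ch ((t j).take d) j).map (fun c => (c, (t j).take d))) some)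
              = some (c, u) ∧ Q <+: u)
          = (univ.filter fun j => ∃ u, σ j = some (c, u) ∧ Q <+: u) := by
        ext j
        simp only [Finset.mem_filter, Finset.mem_univ, true_and]
        constructor
        · rintro ⟨u, hju, hQu⟩
          cases hσj : σ j with
          | some x =>
              obtain rfl : x = (c, u) := by
                simp only [hσj, Option.elim_some] at hju
                simpa using hju
              exact ⟨u, rfl, hQu⟩
          | none =>
              simp only [hσj, Option.elim_none, Option.map_eq_some_iff] at hju
              obtain ⟨c', hc', heq⟩ := hju
              obtain rfl : (t j).take d = u := congrArg Prod.snd heq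

              have h1 := hQu.length_le
              have h2 : ((t j).take d).length ≤ d := by simp
              omega
        · rintro ⟨u, hju, hQu⟩
          exact ⟨u, by simp only [hju, Option.elim_some], hQu⟩
      rw [this]
      exact hσ2 c Q hQd

lemma SEL {k : ℕ} (t : Fin k → List α) (m : α → List α → ℕ) (L : ℕ)
    (hA : ∀ Q : List α, ∑ c, m c Q ≤ (univ.filter fun j => Q <+: t j).card)
    (hB : ∀ (c : α) (Q : List α), ∑ c', m c (Q ++ [c']) ≤ m c Q)
    (hL : ∀ (c : α) (Q : List α), L ≤ Q.length → m c Q = 0) :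
    ∃ t' : Fin k → List α,
      (∀ j, t' j = [] ∨ ∃ c u, u <+: t j ∧ t' j = c :: u) ∧
      (∀ (c : α) (Q : List α), (univ.filter fun j => c :: Q <+: t' j).card = m c Q) := by
  have base : ∃ σ, SelGood t m L σ := by
    refine ⟨fun _ => none, fun j c u h => by simp at h, fun c Q hQ => ?_⟩
    rw [hL c Q hQ]
    simp
  have main : ∀ e, ∃ σ, SelGood t m (L - e) σ := by
    intro e
    induction e with
    | zero => simpa using base
    | succ e ih =>
        by_cases h : e < L
        · have heq : L - e = (L - (e+1)) + 1 := by omega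
          rw [heq] at ih
          exact sel_step t m hA hB _ ih
        · have heq : L - (e+1) = L - e := by omega
          rw [heq]
          exact ih
  have h0 := main L
  rw [Nat.sub_self] at h0
  obtain ⟨σ, hσ1, hσ2⟩ := h0
  refine ⟨fun j => (σ j).elim [] (fun cu => cu.1 :: cu.2), ?_, ?_⟩
  · intro j
    cases hσj : σ j with
    | none => left; simp [hσj]
    | some x =>
        right
        exact ⟨x.1, x.2, (hσ1 j x.1 x.2 (by rw [hσj])).1, by simp [hσj]⟩
  · intro c Q
    have hfeq : (univ.filter fun j => c :: Q <+: (σ j).elim [] (fun cu => cu.1 :: cu.2))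
        = (univ.filter fun j => ∃ u, σ j = some (c, u) ∧ Q <+: u) := by
      ext j
      simp only [Finset.mem_filter, Finset.mem_univ, true_and]
      cases hσj : σ j with
      | none => simp [hσj]
      | some x =>
          obtain ⟨c', u⟩ := x
          simp only [hσj, Option.elim_some, List.cons_prefix_cons, Option.some.injEq,
            Prod.mk.injEq]
          constructor
          · rintro ⟨rfl, h⟩
            exact ⟨u, ⟨rfl, rfl⟩, h⟩
          · rintro ⟨u', ⟨rfl, rfl⟩, h⟩
            exact ⟨rfl, h⟩
    rw [hfeq]
    exact hσ2 c Q (Nat.zero_le _)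

end SEL

section Chain
variable [Fintype α]

lemma chain (n : ℕ) (p : ℕ → α → ℝ) (hp : IsWeighted n p) (z : ℝ) (hz : 1 ≤ z) :
    ∃ T : ℕ → Fin ⌊z⌋₊ → List α,
      (∀ j, T 0 j = []) ∧
      (∀ e, e < n → ∀ j, T (e+1) j = [] ∨ ∃ c u, u <+: T e j ∧ T (e+1) j = c :: u) ∧
      (∀ e, e ≤ n → ∀ j, (T e j).length ≤ e) ∧
      (∀ e, e ≤ n → ∀ Q : List α,
        (univ.filter fun j => Q <+: T e j).card = ⌊z * matchProb n p Q (n + 1 - e)⌋₊) := by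
  have hz0 : (0:ℝ) ≤ z := le_trans zero_le_one hz
  suffices h : ∀ e, e ≤ n → ∃ T : ℕ → Fin ⌊z⌋₊ → List α,
      (∀ j, T 0 j = []) ∧
      (∀ e', e' < e → ∀ j, T (e'+1) j = [] ∨ ∃ c u, u <+: T e' j ∧ T (e'+1) j = c :: u) ∧
      (∀ e', e' ≤ e → ∀ j, (T e' j).length ≤ e') ∧
      (∀ e', e' ≤ e → ∀ Q : List α,
        (univ.filter fun j => Q <+: T e' j).card = ⌊z * matchProb n p Q (n + 1 - e')⌋₊) by
    obtain ⟨T, h1, h2, h3, h4⟩ := h n le_rfl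
    exact ⟨T, h1, fun e he => h2 e he, h3, h4⟩
  intro e
  induction e with
  | zero =>
      intro _
      refine ⟨fun _ _ => [], fun _ => rfl, by omega, ?_, ?_⟩
      · intro e' he' j
        interval_cases e'
        simp
      · intro e' he' Q
        interval_cases e'
        cases Q with
        | nil =>
            simp only [List.nil_prefix, Finset.filter_true, matchProb, mul_one]
            rw [Finset.card_univ, Fintype.card_fin]
        | cons c Q' =>
            have h0 : matchProb n p (c :: Q') (n + 1 - 0) = 0 := by
              rw [matchProb, if_neg (by omega)]
            rw [h0, mul_zero, Nat.floor_zero]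
            rw [Finset.card_eq_zero, Finset.filter_eq_empty_iff]
            intro j _
            simp
  | succ e ih =>
      intro hen
      obtain ⟨T, h1, h2, h3, h4⟩ := ih (by omega)
      set i : ℕ := n - e with hi
      have hi1 : 1 ≤ i := by omega
      have hin : i ≤ n := by omega
      have hisucc : i + 1 = n + 1 - e := by omega
      have hii : n + 1 - (e + 1) = i := by omega
      -- the targets for the selection lemma
      set m : α → List α → ℕ := fun c Q => ⌊z * matchProb n p (c :: Q) i⌋₊ with hm
      have hmpnn : ∀ (Q : List α) (i' : ℕ), 1 ≤ i' → 0 ≤ matchProb n p Q i' :=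
        fun Q i' h => matchProb_nonneg n p hp Q i' h
      have hA : ∀ Q : List α, ∑ c, m c Q ≤ (univ.filter fun j => Q <+: T e j).card := by
        intro Q
        rw [h4 e (by omega) Q, ← hisucc]
        have hrw : ∀ c : α, m c Q = ⌊z * (p i c * matchProb n p Q (i+1))⌋₊ := by
          intro c
          rw [hm]
          simp only
          rw [matchProb, if_pos hin]
        calc ∑ c, m c Q = ∑ c, ⌊z * (p i c * matchProb n p Q (i+1))⌋₊ :=
              Finset.sum_congr rfl fun c _ => hrw c
          _ ≤ ⌊∑ c, z * (p i c * matchProb n p Q (i+1))⌋₊ := by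
              apply floor_sum_le
              intro c _
              exact mul_nonneg hz0 (mul_nonneg ((hp i hi1 hin).1 c) (hmpnn Q (i+1) (by omega)))
          _ = ⌊z * matchProb n p Q (i+1)⌋₊ := by
              congr 1
              have : ∀ c : α, z * (p i c * matchProb n p Q (i+1))
                  = p i c * (z * matchProb n p Q (i+1)) := fun c => by ring
              rw [Finset.sum_congr rfl fun c _ => this c, ← Finset.sum_mul,
                (hp i hi1 hin).2, one_mul]
      have hB : ∀ (c : α) (Q : List α), ∑ c', m c (Q ++ [c']) ≤ m c Q := by
        intro c Q
        have hrw : ∀ c' : α, m c (Q ++ [c'])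
            = ⌊z * (matchProb n p (c :: Q) i
                * (if i + (c :: Q).length ≤ n then p (i + (c :: Q).length) c' else 0))⌋₊ := by
          intro c'
          rw [hm]
          simp only
          rw [show c :: (Q ++ [c']) = (c :: Q) ++ [c'] from rfl,
            matchProb_append_singleton]
        have hg0 : ∀ c' : α,
            0 ≤ (if i + (c :: Q).length ≤ n then p (i + (c :: Q).length) c' else 0) := by
          intro c'
          split
          · exact (hp _ (by omega) (by assumption)).1 c'
          · exact le_rfl
        calc ∑ c', m c (Q ++ [c'])
            = ∑ c', ⌊z * (matchProb n p (c :: Q) i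
                * (if i + (c :: Q).length ≤ n then p (i + (c :: Q).length) c' else 0))⌋₊ :=
              Finset.sum_congr rfl fun c' _ => hrw c'
          _ ≤ ⌊∑ c', z * (matchProb n p (c :: Q) i
                * (if i + (c :: Q).length ≤ n then p (i + (c :: Q).length) c' else 0))⌋₊ := by
              apply floor_sum_le
              intro c' _
              exact mul_nonneg hz0 (mul_nonneg (hmpnn _ i hi1) (hg0 c'))
          _ ≤ m c Q := by
              rw [hm]
              simp only
              apply Nat.floor_le_floor
              have : ∀ c' : α, z * (matchProb n p (c :: Q) i
                  * (if i + (c :: Q).length ≤ n then p (i + (c :: Q).length) c' else 0))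
                  = (if i + (c :: Q).length ≤ n then p (i + (c :: Q).length) c' else 0)
                    * (z * matchProb n p (c :: Q) i) := fun c' => by ring
              rw [Finset.sum_congr rfl fun c' _ => this c', ← Finset.sum_mul]
              by_cases hr : i + (c :: Q).length ≤ n
              · simp only [if_pos hr]
                rw [(hp _ (by omega) hr).2, one_mul]
              · simp only [if_neg hr]
                rw [Finset.sum_const, smul_zero, zero_mul]
                exact mul_nonneg hz0 (hmpnn _ i hi1)
      have hL : ∀ (c : α) (Q : List α), e + 1 ≤ Q.length → m c Q = 0 := by
        intro c Q hQ
        rw [hm]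
        simp only
        rw [matchProb_zero_of_long n p (c :: Q) i (by simp) (by simp; omega), mul_zero,
          Nat.floor_zero]
      obtain ⟨t', ht'1, ht'2⟩ := SEL (T e) m (e + 1) hA hB hL
      refine ⟨Function.update T (e+1) t', ?_, ?_, ?_, ?_⟩
      · intro j
        rw [Function.update_of_ne (by omega : (0:ℕ) ≠ e+1)]
        exact h1 j
      · intro e' he' j
        rcases Nat.lt_or_ge e' e with h' | h'
        · rw [Function.update_of_ne (by omega : e'+1 ≠ e+1),
            Function.update_of_ne (by omega : e' ≠ e+1)]
          exact h2 e' h' j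
        · have : e' = e := by omega
          subst this
          rw [Function.update_self, Function.update_of_ne (by omega : e' ≠ e'+1)]
          exact ht'1 j
      · intro e' he' j
        rcases Nat.lt_or_ge e' (e+1) with h' | h'
        · rw [Function.update_of_ne (by omega : e' ≠ e+1)]
          exact h3 e' (by omega) j
        · have : e' = e + 1 := by omega
          subst this
          rw [Function.update_self]
          rcases ht'1 j with h' | ⟨c, u, hu, heq⟩
          · rw [h']; simp
          · rw [heq]
            have := hu.length_le
            have := h3 e (by omega) j
            simp
            omega
      · intro e' he' Q
        rcases Nat.lt_or_ge e' (e+1) with h' | h'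
        · rw [Function.update_of_ne (by omega : e' ≠ e+1)]
          exact h4 e' (by omega) Q
        · have : e' = e + 1 := by omega
          subst this
          rw [Function.update_self, hii]
          cases Q with
          | nil =>
              simp only [List.nil_prefix, Finset.filter_true, matchProb, mul_one]
              rw [Finset.card_univ, Fintype.card_fin]
          | cons c Q' => exact ht'2 c Q'

end Chain

theorem exists_zEstimation' [Fintype α] [Nonempty α]
    (n : ℕ) (p : ℕ → α → ℝ) (hp : IsWeighted n p) (z : ℝ) (hz : 1 ≤ z) :
    ∃ (S : Fin ⌊z⌋₊ → List α) (π : Fin ⌊z⌋₊ → ℕ → ℕ),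
      (∀ j, (S j).length = n) ∧ (∀ j, IsPropertyArray n (π j)) ∧
      ∀ (P : List α) (i : ℕ), 1 ≤ i → i ≤ n →
        countOcc S π P i = ⌊z * matchProb n p P i⌋₊ := by
  haveI : Inhabited α := ⟨Classical.arbitrary α⟩
  obtain ⟨T, h1, h2, h3, h4⟩ := chain n p hp z hz
  set S : Fin ⌊z⌋₊ → List α := fun j => List.ofFn (fun r : Fin n => (T (n - (r:ℕ)) j).headI)
    with hS
  set π : Fin ⌊z⌋₊ → ℕ → ℕ := fun j i =>
    if 1 ≤ i ∧ i ≤ n then i - 1 + (T (n + 1 - i) j).length else (if i = 0 then 0 else n)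
    with hπ
  have hSlen : ∀ j, (S j).length = n := fun j => by rw [hS]; exact List.length_ofFn
  -- the constructed truncated strings are prefixes of the suffixes of `S j`
  have hpre : ∀ e, e ≤ n → ∀ j, T e j <+: (S j).drop (n - e) := by
    intro e
    induction e with
    | zero => intro _ j; rw [h1 j]; exact List.nil_prefix
    | succ e ih =>
        intro hen j
        rcases h2 e (by omega) j with h | ⟨c, u, hu, heq⟩
        · rw [h]; exact List.nil_prefix
        · have hlt : n - (e+1) < (S j).length := by rw [hSlen]; omega
          rw [heq, List.drop_eq_getElem_cons hlt]
          have hget : (S j)[n - (e+1)] = c := by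
            simp only [hS, List.getElem_ofFn]
            show (T (n - (n - (e+1))) j).headI = c
            rw [show n - (n - (e+1)) = e + 1 by omega, heq]
            rfl
          rw [hget, List.cons_prefix_cons]
          have : n - (e+1) + 1 = n - e := by omega
          rw [this]
          exact ⟨rfl, hu.trans (ih (by omega) j)⟩
  refine ⟨S, π, hSlen, ?_, ?_⟩
  · intro j
    constructor
    · intro i hi1 hin
      rw [hπ]
      simp only [if_pos (And.intro hi1 hin)]
      have := h3 (n + 1 - i) (by omega) j
      omega
    · intro i hi1 hin
      rw [hπ]
      simp only [if_pos (And.intro hi1 (by omega : i ≤ n)),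
        if_pos (And.intro (by omega : 1 ≤ i + 1) hin)]
      have hstep := h2 (n - i) (by omega) j
      have hee : n - i + 1 = n + 1 - i := by omega
      rw [hee] at hstep
      rcases hstep with h | ⟨c, u, hu, heq⟩
      · rw [h]
        simp only [List.length_nil]
        omega
      · rw [heq]
        have := hu.length_le
        simp only [List.length_cons]
        have h5 : n + 1 - (i + 1) = n - i := by omega
        rw [h5]
        omega
  · intro P i hi1 hin
    have hocc : ∀ j, occursAt (S j) (π j) P i ↔ P <+: T (n + 1 - i) j := by
      intro j
      have hdroplen : ((S j).drop (i - 1)).length = n + 1 - i := by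
        rw [List.length_drop, hSlen]; omega
      have hTpre : T (n + 1 - i) j <+: (S j).drop (i - 1) := by
        have := hpre (n + 1 - i) (by omega) j
        have heq : n - (n + 1 - i) = i - 1 := by omega
        rw [heq] at this
        exact this
      have hfac : factor (S j) i (i + P.length - 1) = P ↔ P <+: (S j).drop (i - 1) := by
        rw [factor]
        have : i + P.length - 1 + 1 - i = P.length := by omega
        rw [this]
        rw [List.prefix_iff_eq_take]
        exact ⟨fun h => h.symm, fun h => h.symm⟩
      have hπi : π j i = i - 1 + (T (n + 1 - i) j).length := by
        rw [hπ]; simp only [if_pos (And.intro hi1 hin)]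
      rw [occursAt, hfac, hπi]
      constructor
      · rintro ⟨hPdrop, hle⟩
        exact prefix_of_prefix_of_le hPdrop hTpre (by omega)
      · intro hPT
        have h5 := hPT.length_le
        exact ⟨hPT.trans hTpre, by omega⟩
    rw [countOcc]
    rw [Finset.filter_congr (fun j _ => hocc j)]
    have := h4 (n + 1 - i) (by omega) P
    have heq : n + 1 - (n + 1 - i) = i := by omega
    rw [heq] at this
    exact this


/-- every weighted sequence admits a `z`-estimation. -/
theorem exists_zEstimation [Fintype α] [Nonempty α]
    (n : ℕ) (p : ℕ → α → ℝ) (hp : IsWeighted n p) (z : ℝ) (hz : 1 ≤ z) :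
    ∃ (S : Fin ⌊z⌋₊ → List α) (π : Fin ⌊z⌋₊ → ℕ → ℕ),
      (∀ j, (S j).length = n) ∧ (∀ j, IsPropertyArray n (π j)) ∧
      ∀ (P : List α) (i : ℕ), 1 ≤ i → i ≤ n →
        countOcc S π P i = ⌊z * matchProb n p P i⌋₊ := by
  exact exists_zEstimation' n p hp z hz
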